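/- For even n ≥ 6 and any 3 ≤ i, j ≤ n-1 with j ≠ i, the lobster tree A^iB displays the character φ_j. -/

import Mathlib

namespace PP

/-- A vertex is a leaf (degree at most one) if it has at most one neighbour. -/
def IsLeafVert {V : Type} (G : SimpleGraph V) (w : V) : Prop :=
  ∀ w₁ w₂ : V, G.Adj w w₁ → G.Adj w w₂ → w₁ = w₂

/-- A (finite, unrooted) phylogenetic tree on a label set `X ⊆ L`:
its leaves are bijectively labelled by the elements of `X`. -/
structure PhyloTree {L : Type} (X : Set L) where
  V : Type
  finV : Finite V
  G : SimpleGraph V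
  isTree : G.IsTree
  leaf : L → V
  leaf_injOn : Set.InjOn leaf X
  leaf_isLeaf : ∀ x ∈ X, IsLeafVert G (leaf x)
  leaf_surj : ∀ w, IsLeafVert G w → ∃ x ∈ X, leaf x = w

/-- The vertex set of the minimal subtree `T[S]` spanning the leaves labelled by `S ∩ X`. -/
def subtree {L : Type} {X : Set L} (T : PhyloTree X) (S : Set L) : Set T.V :=
  {w | ∃ x ∈ S ∩ X, ∃ y ∈ S ∩ X,
        ∃ p : T.G.Walk (T.leaf x) (T.leaf y), p.IsPath ∧ w ∈ p.support}

/-- `T` displays the character `χ` (a state assignment, whose nonempty fibres on `X`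
are the states) if the minimal subtrees spanning distinct states are vertex-disjoint. -/
def displays {L : Type} {X : Set L} (T : PhyloTree X) (χ : L → ℕ) : Prop :=
  ∀ s t : ℕ, s ≠ t → Disjoint (subtree T {x | χ x = s}) (subtree T {x | χ x = t})

/-- A set of characters is compatible if some tree on `X` displays all of them. -/
def compatible {L : Type} (X : Set L) (C : Set (L → ℕ)) : Prop :=
  ∃ T : PhyloTree X, ∀ χ ∈ C, displays T χ

/-- Labels: `(false, i)` is `aᵢ`, `(true, i)` is `bᵢ`. -/
abbrev Lbl : Type := Bool × ℕ

def a (i : ℕ) : Lbl := (false, i)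
def b (i : ℕ) : Lbl := (true, i)

/-- `X = {a₁,…,aₙ,b₁,…,bₙ}`. -/
def Xset (n : ℕ) : Set Lbl := {p | 1 ≤ p.2 ∧ p.2 ≤ n}

/-- `X_{≤ i} = {aⱼ, bⱼ : 1 ≤ j ≤ i}`. -/
def XLE (i : ℕ) : Set Lbl := {p | 1 ≤ p.2 ∧ p.2 ≤ i}

/-- χ_j = X_{≤j-2} | a_{j-1} | b_{j-1} | a_j a_{j+1} | b_j b_{j+1} | a_{j+2} | b_{j+2} | X_{≥j+3} -/
def chi (j : ℕ) : Lbl → ℕ := fun p =>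
  if p.2 + 2 ≤ j then 0
  else if p.2 + 1 = j then cond p.1 2 1
  else if p.2 ≤ j + 1 then cond p.1 4 3
  else if p.2 = j + 2 then cond p.1 6 5
  else 7

def phiMain (j i : ℕ) : ℕ :=
  if i < j then 0 else if i = j then 3 else if i = j + 1 then 4 else 5

def phiSide (j i : ℕ) : ℕ :=
  if i + 3 ≤ j then 0 else if i + 2 = j then 1 else if i + 1 = j then 2 else 5

/-- For even j: φ_j = X_{≤j-3}∪{b_{j-2},b_{j-1}} | a_{j-2} | a_{j-1} | b_j | b_{j+1} | {a_j,a_{j+1}}∪X_{≥j+2};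
for odd j the roles of a and b are swapped. -/
def phi (j : ℕ) : Lbl → ℕ := fun p =>
  if j % 2 = 0 then cond p.1 (phiMain j p.2) (phiSide j p.2)
  else cond p.1 (phiSide j p.2) (phiMain j p.2)

/-- Ω_A = a₁b₁b₂ | {a₂} ∪ X_{≥3}. -/
def OmA : Lbl → ℕ := fun p =>
  cond p.1 (if p.2 ≤ 2 then 0 else 1) (if p.2 = 1 then 0 else 1)

/-- Ω_B = X_{≤n-2} ∪ {b_{n-1}} | a_{n-1} aₙ bₙ. -/
def OmB (n : ℕ) : Lbl → ℕ := fun p =>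
  cond p.1 (if p.2 = n then 1 else 0) (if p.2 + 1 ≥ n then 1 else 0)

/-- The edges of the lobster `A^iB`: central path a₁,u₁,…,u_{i-2},u_A,u_B,u_i,…,u_{n-1},bₙ;
edges u_k v_k for k ≠ i-1; if i is even, u_A is adjacent to aᵢ and u_B to b_{i-1};
if i is odd, u_A is adjacent to bᵢ and u_B to a_{i-1}; for k < i-1, v_k is adjacent to
b_k,b_{k+1} (k odd) or a_k,a_{k+1} (k even); for k > i-1 the a/b roles are swapped. -/
def AdjSpecJag (n i : ℕ) {X : Set Lbl} (T : PhyloTree X) (u v : ℕ → T.V)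
    (uA uB : T.V) (w w' : T.V) : Prop :=
  (w = T.leaf (a 1) ∧ w' = u 1) ∨
  (∃ k, 1 ≤ k ∧ k + 1 ≤ i - 2 ∧ w = u k ∧ w' = u (k + 1)) ∨
  (w = u (i - 2) ∧ w' = uA) ∨
  (w = uA ∧ w' = uB) ∨
  (w = uB ∧ w' = u i) ∨
  (∃ k, i ≤ k ∧ k + 1 ≤ n - 1 ∧ w = u k ∧ w' = u (k + 1)) ∨
  (w = u (n - 1) ∧ w' = T.leaf (b n)) ∨
  (∃ k, 1 ≤ k ∧ k ≤ n - 1 ∧ k ≠ i - 1 ∧ w = u k ∧ w' = v k) ∨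
  (i % 2 = 0 ∧ w = uA ∧ w' = T.leaf (a i)) ∨
  (i % 2 = 0 ∧ w = uB ∧ w' = T.leaf (b (i - 1))) ∨
  (i % 2 = 1 ∧ w = uA ∧ w' = T.leaf (b i)) ∨
  (i % 2 = 1 ∧ w = uB ∧ w' = T.leaf (a (i - 1))) ∨
  (∃ k, 1 ≤ k ∧ k + 1 < i ∧ k % 2 = 1 ∧ w = v k ∧
      (w' = T.leaf (b k) ∨ w' = T.leaf (b (k + 1)))) ∨
  (∃ k, 1 ≤ k ∧ k + 1 < i ∧ k % 2 = 0 ∧ w = v k ∧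
      (w' = T.leaf (a k) ∨ w' = T.leaf (a (k + 1)))) ∨
  (∃ k, i - 1 < k ∧ k ≤ n - 1 ∧ k % 2 = 1 ∧ w = v k ∧
      (w' = T.leaf (a k) ∨ w' = T.leaf (a (k + 1)))) ∨
  (∃ k, i - 1 < k ∧ k ≤ n - 1 ∧ k % 2 = 0 ∧ w = v k ∧
      (w' = T.leaf (b k) ∨ w' = T.leaf (b (k + 1))))

/-- `T`, with internal vertices `u k`, `v k` (k ∈ [n-1] \ {i-1}) and `uA`, `uB`,
is the lobster `A^iB`. -/
def IsLobsterJag (n i : ℕ) (T : PhyloTree (Xset n)) (u v : ℕ → T.V) (uA uB : T.V) : Prop :=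
  (∀ k l, 1 ≤ k → k ≤ n - 1 → k ≠ i - 1 → 1 ≤ l → l ≤ n - 1 → l ≠ i - 1 →
      (u k = u l → k = l) ∧ (v k = v l → k = l) ∧ u k ≠ v l ∧
      u k ≠ uA ∧ u k ≠ uB ∧ v k ≠ uA ∧ v k ≠ uB) ∧
  uA ≠ uB ∧
  (∀ p ∈ Xset n, T.leaf p ≠ uA ∧ T.leaf p ≠ uB ∧
      ∀ k, 1 ≤ k → k ≤ n - 1 → k ≠ i - 1 → T.leaf p ≠ u k ∧ T.leaf p ≠ v k) ∧
  (∀ w : T.V, (∃ p ∈ Xset n, T.leaf p = w) ∨ w = uA ∨ w = uB ∨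
      (∃ k, 1 ≤ k ∧ k ≤ n - 1 ∧ k ≠ i - 1 ∧ (u k = w ∨ v k = w))) ∧
  (∀ w w' : T.V, T.G.Adj w w' ↔
      (AdjSpecJag n i T u v uA uB w w' ∨ AdjSpecJag n i T u v uA uB w' w))


open SimpleGraph

/-! ### Auxiliary development -/

/-- The spine of the lobster, as a sequence of vertices indexed by `0,…,n+1`. -/
def spineV (n i : ℕ) {X : Set Lbl} (T : PhyloTree X) (u : ℕ → T.V) (uA uB : T.V) (c : ℕ) :
    T.V :=
  if c = 0 then T.leaf (a 1)
  else if c ≤ i - 2 then u c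
  else if c = i - 1 then uA
  else if c = i then uB
  else if c ≤ n then u (c - 1)
  else T.leaf (b n)

/-- Data describing a pendant leaf attachment. -/
def PendData (i : ℕ) (t : Bool) (m c k : ℕ) : Prop :=
  (m = k ∨ m = k + 1) ∧
  ((k ≤ i - 2 ∧ c = k ∧ (k + cond t 1 0) % 2 = 0) ∨
   (i ≤ k ∧ c = k + 1 ∧ (k + cond t 1 0) % 2 = 1))

/-- Data describing where a leaf is anchored to the spine. -/
def AnchData (n i : ℕ) (t : Bool) (m c : ℕ) : Prop :=
  (t = false ∧ m = 1 ∧ c = 0) ∨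
  (t = true ∧ m = n ∧ c = n + 1) ∨
  (m = i ∧ c = i - 1 ∧ (i + cond t 1 0) % 2 = 0) ∨
  (m = i - 1 ∧ c = i ∧ (i + cond t 1 0) % 2 = 1) ∨
  (∃ k, 1 ≤ k ∧ k ≤ n - 1 ∧ k ≠ i - 1 ∧ PendData i t m c k)

/-- The region of the tree assigned to the state `s` of `φ_j`. -/
def Region (n i j : ℕ) (T : PhyloTree (Xset n)) (u v : ℕ → T.V) (uA uB : T.V) (s : ℕ) :
    Set T.V :=
  {w | (∃ t : Bool, ∃ m : ℕ, 1 ≤ m ∧ m ≤ n ∧ phi j (t, m) = s ∧ w = T.leaf (t, m)) ∨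
       (s = 0 ∧ ∃ c, c ≤ j - 1 ∧ w = spineV n i T u uA uB c) ∨
       (s = 5 ∧ ∃ c, j ≤ c ∧ c ≤ n + 1 ∧ w = spineV n i T u uA uB c) ∨
       (s = 0 ∧ ∃ k, 1 ≤ k ∧ k ≤ n - 1 ∧ k ≠ i - 1 ∧
          (k ≤ j - 2 ∨ (k = j - 1 ∧ k ≤ i - 2)) ∧ w = v k) ∨
       (s = 5 ∧ ∃ k, 1 ≤ k ∧ k ≤ n - 1 ∧ k ≠ i - 1 ∧
          (j ≤ k ∨ (k = j - 1 ∧ i ≤ k)) ∧ w = v k)}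

section SpineLemmas

variable {n i : ℕ} {X : Set Lbl} {T : PhyloTree X} {u : ℕ → T.V} {uA uB : T.V}

lemma spineV_zero : spineV n i T u uA uB 0 = T.leaf (a 1) := by simp [spineV]

lemma spineV_left {c : ℕ} (h1 : 1 ≤ c) (h2 : c ≤ i - 2) :
    spineV n i T u uA uB c = u c := by
  unfold spineV; split_ifs <;> first | rfl | (exfalso; omega) | (exfalso; simp_all)

lemma spineV_uA (hi3 : 3 ≤ i) : spineV n i T u uA uB (i - 1) = uA := by
  unfold spineV; split_ifs <;> first | rfl | (exfalso; omega) | (exfalso; simp_all)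

lemma spineV_uB (hi3 : 3 ≤ i) : spineV n i T u uA uB i = uB := by
  unfold spineV; split_ifs <;> first | rfl | (exfalso; omega) | (exfalso; simp_all)

lemma spineV_right {c : ℕ} (hi3 : 3 ≤ i) (h1 : i + 1 ≤ c) (h2 : c ≤ n) :
    spineV n i T u uA uB c = u (c - 1) := by
  unfold spineV; split_ifs <;> first | rfl | (exfalso; omega) | (exfalso; simp_all)

lemma spineV_top (hn6 : 6 ≤ n) (hi3 : 3 ≤ i) (hi' : i ≤ n - 1) :
    spineV n i T u uA uB (n + 1) = T.leaf (b n) := by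
  unfold spineV; split_ifs <;> first | rfl | (exfalso; omega) | (exfalso; simp_all)

end SpineLemmas

section ArithLemmas

variable {n i j : ℕ}

lemma phi_zero {t : Bool} {m : ℕ} (h : phi j (t, m) = 0) :
    ((cond t 1 0 + j) % 2 = 1 ∧ m + 1 ≤ j) ∨ ((cond t 1 0 + j) % 2 = 0 ∧ m + 3 ≤ j) := by
  cases t <;> rcases Nat.mod_two_eq_zero_or_one j with hj2 | hj2 <;>
    simp only [phi, phiMain, phiSide, hj2, Bool.cond_false, Bool.cond_true] at h ⊢ <;>
    split_ifs at h <;> first | omega | (exfalso; assumption)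

lemma phi_five {t : Bool} {m : ℕ} (h : phi j (t, m) = 5) :
    ((cond t 1 0 + j) % 2 = 1 ∧ j + 2 ≤ m) ∨ ((cond t 1 0 + j) % 2 = 0 ∧ j ≤ m) := by
  cases t <;> rcases Nat.mod_two_eq_zero_or_one j with hj2 | hj2 <;>
    simp only [phi, phiMain, phiSide, hj2, Bool.cond_false, Bool.cond_true] at h ⊢ <;>
    split_ifs at h <;> first | omega | (exfalso; assumption)

lemma phi_le5 (j : ℕ) (t : Bool) (m : ℕ) : phi j (t, m) ≤ 5 := by
  cases t <;> rcases Nat.mod_two_eq_zero_or_one j with hj2 | hj2 <;>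
    simp only [phi, phiMain, phiSide, hj2, Bool.cond_false, Bool.cond_true] <;>
    split_ifs <;> first | omega | (exfalso; assumption)

lemma phi_a1 (hj3 : 3 ≤ j) : phi j (a 1) = 0 := by
  show phi j (false, 1) = 0
  rcases Nat.mod_two_eq_zero_or_one j with hj2 | hj2 <;>
    simp only [phi, phiMain, phiSide, hj2, a, Bool.cond_false, Bool.cond_true] <;>
    split_ifs <;> first | omega | (exfalso; assumption)

lemma phi_bn (hn2 : n % 2 = 0) (hn6 : 6 ≤ n) (hj3 : 3 ≤ j) (hj' : j ≤ n - 1) :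
    phi j (b n) = 5 := by
  show phi j (true, n) = 5
  rcases Nat.mod_two_eq_zero_or_one j with hj2 | hj2 <;>
    simp only [phi, phiMain, phiSide, hj2, b, Bool.cond_false, Bool.cond_true] <;>
    split_ifs <;> first | omega | (exfalso; assumption)

lemma cond_le_one (t : Bool) : cond t 1 0 ≤ 1 := by cases t <;> simp

lemma cond_eq_bool {t1 t2 : Bool} (h : (cond t1 1 0 : ℕ) = cond t2 1 0) : t1 = t2 := by
  cases t1 <;> cases t2 <;> simp_all

lemma phi_sing {t : Bool} {m s : ℕ} (h : phi j (t, m) = s)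
    (hs : s = 1 ∨ s = 2 ∨ s = 3 ∨ s = 4) :
    (s ≤ 2 → (cond t 1 0 + j) % 2 = 0 ∧ m + 3 = j + s) ∧
    (3 ≤ s → (cond t 1 0 + j) % 2 = 1 ∧ m + 3 = j + s) := by
  cases t <;> rcases Nat.mod_two_eq_zero_or_one j with hj2 | hj2 <;>
    simp only [phi, phiMain, phiSide, hj2, Bool.cond_false, Bool.cond_true] at h ⊢ <;>
    split_ifs at h <;> first | omega | (exfalso; assumption)

lemma phi_singleton {t1 t2 : Bool} {m1 m2 s : ℕ}
    (hs : s = 1 ∨ s = 2 ∨ s = 3 ∨ s = 4)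
    (h1 : phi j (t1, m1) = s) (h2 : phi j (t2, m2) = s) : t1 = t2 ∧ m1 = m2 := by
  have e1 := phi_sing h1 hs
  have e2 := phi_sing h2 hs
  have b1 := cond_le_one t1
  have b2 := cond_le_one t2
  refine ⟨cond_eq_bool (by omega), by omega⟩

lemma anch_le0 (hn2 : n % 2 = 0) (hn6 : 6 ≤ n) (hi3 : 3 ≤ i) (hi' : i ≤ n - 1)
    (hj3 : 3 ≤ j) (hj' : j ≤ n - 1) (hij : j ≠ i) {t : Bool} {m c : ℕ}
    (hd : AnchData n i t m c) (hphi : phi j (t, m) = 0) : c ≤ j - 1 := by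
  have hz := phi_zero hphi
  have he := cond_le_one t
  rcases hd with ⟨ht, rfl, rfl⟩ | ⟨ht, rfl, rfl⟩ | ⟨rfl, rfl, hp⟩ | ⟨rfl, rfl, hp⟩ |
    ⟨k, hk1, hk2, hk3, ⟨hmk, hside⟩⟩
  · omega
  · omega
  · omega
  · omega
  · rcases hside with ⟨hk4, rfl, hk5⟩ | ⟨hk4, rfl, hk5⟩ <;> omega

lemma anch_ge5 (hn2 : n % 2 = 0) (hn6 : 6 ≤ n) (hi3 : 3 ≤ i) (hi' : i ≤ n - 1)
    (hj3 : 3 ≤ j) (hj' : j ≤ n - 1) (hij : j ≠ i) {t : Bool} {m c : ℕ}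
    (hd : AnchData n i t m c) (hphi : phi j (t, m) = 5) : j ≤ c := by
  have hz := phi_five hphi
  have he := cond_le_one t
  rcases hd with ⟨ht, rfl, rfl⟩ | ⟨ht, rfl, rfl⟩ | ⟨rfl, rfl, hp⟩ | ⟨rfl, rfl, hp⟩ |
    ⟨k, hk1, hk2, hk3, ⟨hmk, hside⟩⟩
  · omega
  · omega
  · omega
  · omega
  · rcases hside with ⟨hk4, rfl, hk5⟩ | ⟨hk4, rfl, hk5⟩ <;> omega

lemma pend0 (hn2 : n % 2 = 0) (hn6 : 6 ≤ n) (hi3 : 3 ≤ i) (hi' : i ≤ n - 1)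
    (hj3 : 3 ≤ j) (hj' : j ≤ n - 1) (hij : j ≠ i) {t : Bool} {m c k : ℕ}
    (hd : PendData i t m c k) (hphi : phi j (t, m) = 0) :
    k ≤ j - 2 ∨ (k = j - 1 ∧ k ≤ i - 2) := by
  have hz := phi_zero hphi
  have he := cond_le_one t
  obtain ⟨hmk, hside⟩ := hd
  rcases hside with ⟨hk4, rfl, hk5⟩ | ⟨hk4, rfl, hk5⟩ <;> omega

lemma pend5 (hn2 : n % 2 = 0) (hn6 : 6 ≤ n) (hi3 : 3 ≤ i) (hi' : i ≤ n - 1)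
    (hj3 : 3 ≤ j) (hj' : j ≤ n - 1) (hij : j ≠ i) {t : Bool} {m c k : ℕ}
    (hd : PendData i t m c k) (hphi : phi j (t, m) = 5) :
    j ≤ k ∨ (k = j - 1 ∧ i ≤ k) := by
  have hz := phi_five hphi
  have he := cond_le_one t
  obtain ⟨hmk, hside⟩ := hd
  rcases hside with ⟨hk4, rfl, hk5⟩ | ⟨hk4, rfl, hk5⟩ <;> omega

end ArithLemmas

section GraphLemmas

variable {n i j : ℕ} {T : PhyloTree (Xset n)} {u v : ℕ → T.V} {uA uB : T.V}

lemma a1_mem (hn6 : 6 ≤ n) : (a 1) ∈ Xset n := ⟨le_refl 1, show 1 ≤ n by omega⟩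

lemma bn_mem (hn6 : 6 ≤ n) : (b n) ∈ Xset n := ⟨show 1 ≤ n by omega, le_refl n⟩

lemma spine_adj (hn6 : 6 ≤ n) (hi3 : 3 ≤ i) (hi' : i ≤ n - 1)
    (h : IsLobsterJag n i T u v uA uB) {c : ℕ} (hc : c ≤ n) :
    T.G.Adj (spineV n i T u uA uB c) (spineV n i T u uA uB (c + 1)) := by
  rw [h.2.2.2.2]
  left
  have hcase : c = 0 ∨ (1 ≤ c ∧ c + 1 ≤ i - 2) ∨ c = i - 2 ∨ c = i - 1 ∨ c = i ∨
      (i + 1 ≤ c ∧ c ≤ n - 1) ∨ c = n := by omega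
  unfold AdjSpecJag
  rcases hcase with rfl | ⟨h1, h2⟩ | hce | hce | hce | ⟨h1, h2⟩ | hce
  · rw [spineV_zero, spineV_left (by omega) (by omega)]
    exact Or.inl ⟨rfl, rfl⟩
  · rw [spineV_left (by omega) (by omega), spineV_left (by omega) h2]
    exact Or.inr (Or.inl ⟨c, h1, h2, rfl, rfl⟩)
  · rw [hce, spineV_left (by omega) (by omega), show i - 2 + 1 = i - 1 by omega,
      spineV_uA hi3]
    exact Or.inr (Or.inr (Or.inl ⟨rfl, rfl⟩))
  · rw [hce, spineV_uA hi3, show i - 1 + 1 = i by omega, spineV_uB hi3]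
    exact Or.inr (Or.inr (Or.inr (Or.inl ⟨rfl, rfl⟩)))
  · rw [hce, spineV_uB hi3, spineV_right hi3 (by omega) (by omega),
      show i + 1 - 1 = i by omega]
    exact Or.inr (Or.inr (Or.inr (Or.inr (Or.inl ⟨rfl, rfl⟩))))
  · rw [spineV_right hi3 (by omega) (by omega), spineV_right hi3 (by omega) (by omega)]
    refine Or.inr (Or.inr (Or.inr (Or.inr (Or.inr (Or.inl
      ⟨c - 1, by omega, by omega, rfl, ?_⟩)))))
    exact congrArg u (by omega)
  · rw [hce, spineV_right hi3 (by omega) (by omega), spineV_top hn6 hi3 hi']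
    exact Or.inr (Or.inr (Or.inr (Or.inr (Or.inr (Or.inr (Or.inl ⟨rfl, rfl⟩))))))

lemma spine_walk (hn6 : 6 ≤ n) (hi3 : 3 ≤ i) (hi' : i ≤ n - 1)
    (h : IsLobsterJag n i T u v uA uB) :
    ∀ c, c ≤ n + 1 → ∀ d, d ≤ c →
      ∃ w : T.G.Walk (spineV n i T u uA uB c) (spineV n i T u uA uB d),
        ∀ x ∈ w.support, ∃ e, d ≤ e ∧ e ≤ c ∧ x = spineV n i T u uA uB e := by
  intro c
  induction c with
  | zero =>
    intro _ d hd
    have hd0 : d = 0 := by omega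
    subst hd0
    refine ⟨Walk.nil, ?_⟩
    intro x hx
    simp only [Walk.support_nil, List.mem_singleton] at hx
    exact ⟨0, le_refl 0, le_refl 0, hx⟩
  | succ c ih =>
    intro hc d hd
    by_cases hdc : d = c + 1
    · subst hdc
      refine ⟨Walk.nil, ?_⟩
      intro x hx
      simp only [Walk.support_nil, List.mem_singleton] at hx
      exact ⟨c + 1, le_refl _, le_refl _, hx⟩
    · obtain ⟨w, hw⟩ := ih (by omega) d (by omega)
      refine ⟨Walk.cons (spine_adj hn6 hi3 hi' h (by omega)).symm w, ?_⟩
      intro x hx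
      rw [Walk.support_cons] at hx
      rcases List.mem_cons.mp hx with rfl | hx
      · exact ⟨c + 1, by omega, le_refl _, rfl⟩
      · obtain ⟨e, he1, he2, he3⟩ := hw x hx
        exact ⟨e, he1, by omega, he3⟩


lemma adj_uv (h : IsLobsterJag n i T u v uA uB)
    {k : ℕ} (hk1 : 1 ≤ k) (hk2 : k ≤ n - 1) (hk3 : k ≠ i - 1) : T.G.Adj (u k) (v k) := by
  rw [h.2.2.2.2]; left; unfold AdjSpecJag
  exact Or.inr (Or.inr (Or.inr (Or.inr (Or.inr (Or.inr (Or.inr (Or.inl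
    ⟨k, hk1, hk2, hk3, rfl, rfl⟩)))))))

lemma adj_uA_even (h : IsLobsterJag n i T u v uA uB) (hi2 : i % 2 = 0) :
    T.G.Adj uA (T.leaf (a i)) := by
  rw [h.2.2.2.2]; left; unfold AdjSpecJag
  exact Or.inr (Or.inr (Or.inr (Or.inr (Or.inr (Or.inr (Or.inr (Or.inr (Or.inl
    ⟨hi2, rfl, rfl⟩))))))))

lemma adj_uB_even (h : IsLobsterJag n i T u v uA uB) (hi2 : i % 2 = 0) :
    T.G.Adj uB (T.leaf (b (i - 1))) := by
  rw [h.2.2.2.2]; left; unfold AdjSpecJag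
  exact Or.inr (Or.inr (Or.inr (Or.inr (Or.inr (Or.inr (Or.inr (Or.inr (Or.inr (Or.inl
    ⟨hi2, rfl, rfl⟩)))))))))

lemma adj_uA_odd (h : IsLobsterJag n i T u v uA uB) (hi2 : i % 2 = 1) :
    T.G.Adj uA (T.leaf (b i)) := by
  rw [h.2.2.2.2]; left; unfold AdjSpecJag
  exact Or.inr (Or.inr (Or.inr (Or.inr (Or.inr (Or.inr (Or.inr (Or.inr (Or.inr (Or.inr
    (Or.inl ⟨hi2, rfl, rfl⟩))))))))))

lemma adj_uB_odd (h : IsLobsterJag n i T u v uA uB) (hi2 : i % 2 = 1) :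
    T.G.Adj uB (T.leaf (a (i - 1))) := by
  rw [h.2.2.2.2]; left; unfold AdjSpecJag
  exact Or.inr (Or.inr (Or.inr (Or.inr (Or.inr (Or.inr (Or.inr (Or.inr (Or.inr (Or.inr
    (Or.inr (Or.inl ⟨hi2, rfl, rfl⟩)))))))))))

lemma adj_v_left_b (h : IsLobsterJag n i T u v uA uB)
    {k : ℕ} (hk1 : 1 ≤ k) (hk2 : k + 1 < i) (hk3 : k % 2 = 1)
    {p : Lbl} (hp : p = b k ∨ p = b (k + 1)) : T.G.Adj (v k) (T.leaf p) := by
  rw [h.2.2.2.2]; left; unfold AdjSpecJag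
  refine Or.inr (Or.inr (Or.inr (Or.inr (Or.inr (Or.inr (Or.inr (Or.inr (Or.inr (Or.inr
    (Or.inr (Or.inr (Or.inl ⟨k, hk1, hk2, hk3, rfl, ?_⟩))))))))))))
  rcases hp with rfl | rfl
  · exact Or.inl rfl
  · exact Or.inr rfl

lemma adj_v_left_a (h : IsLobsterJag n i T u v uA uB)
    {k : ℕ} (hk1 : 1 ≤ k) (hk2 : k + 1 < i) (hk3 : k % 2 = 0)
    {p : Lbl} (hp : p = a k ∨ p = a (k + 1)) : T.G.Adj (v k) (T.leaf p) := by
  rw [h.2.2.2.2]; left; unfold AdjSpecJag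
  refine Or.inr (Or.inr (Or.inr (Or.inr (Or.inr (Or.inr (Or.inr (Or.inr (Or.inr (Or.inr
    (Or.inr (Or.inr (Or.inr (Or.inl ⟨k, hk1, hk2, hk3, rfl, ?_⟩)))))))))))))
  rcases hp with rfl | rfl
  · exact Or.inl rfl
  · exact Or.inr rfl

lemma adj_v_right_a (h : IsLobsterJag n i T u v uA uB)
    {k : ℕ} (hk1 : i - 1 < k) (hk2 : k ≤ n - 1) (hk3 : k % 2 = 1)
    {p : Lbl} (hp : p = a k ∨ p = a (k + 1)) : T.G.Adj (v k) (T.leaf p) := by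
  rw [h.2.2.2.2]; left; unfold AdjSpecJag
  refine Or.inr (Or.inr (Or.inr (Or.inr (Or.inr (Or.inr (Or.inr (Or.inr (Or.inr (Or.inr
    (Or.inr (Or.inr (Or.inr (Or.inr (Or.inl ⟨k, hk1, hk2, hk3, rfl, ?_⟩))))))))))))))
  rcases hp with rfl | rfl
  · exact Or.inl rfl
  · exact Or.inr rfl

lemma adj_v_right_b (h : IsLobsterJag n i T u v uA uB)
    {k : ℕ} (hk1 : i - 1 < k) (hk2 : k ≤ n - 1) (hk3 : k % 2 = 0)
    {p : Lbl} (hp : p = b k ∨ p = b (k + 1)) : T.G.Adj (v k) (T.leaf p) := by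
  rw [h.2.2.2.2]; left; unfold AdjSpecJag
  refine Or.inr (Or.inr (Or.inr (Or.inr (Or.inr (Or.inr (Or.inr (Or.inr (Or.inr (Or.inr
    (Or.inr (Or.inr (Or.inr (Or.inr (Or.inr ⟨k, hk1, hk2, hk3, rfl, ?_⟩))))))))))))))
  rcases hp with rfl | rfl
  · exact Or.inl rfl
  · exact Or.inr rfl

lemma pend_left (hn6 : 6 ≤ n) (hi3 : 3 ≤ i) (hi' : i ≤ n - 1)
    (h : IsLobsterJag n i T u v uA uB) {k : ℕ} (hk1 : 1 ≤ k) (hk2 : k ≤ i - 2)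
    {p : Lbl} (hvp : T.G.Adj (v k) (T.leaf p)) :
    ∃ w : T.G.Walk (T.leaf p) (spineV n i T u uA uB k),
      ∀ x ∈ w.support, x = T.leaf p ∨ x = spineV n i T u uA uB k ∨ x = v k := by
  have huv : T.G.Adj (u k) (v k) := adj_uv h hk1 (by omega) (by omega)
  rw [spineV_left hk1 hk2]
  refine ⟨Walk.cons hvp.symm (Walk.cons huv.symm Walk.nil), ?_⟩
  intro x hx
  simp only [Walk.support_cons, Walk.support_nil, List.mem_cons,
    List.mem_singleton, List.not_mem_nil, or_false] at hx
  rcases hx with rfl | rfl | rfl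
  · exact Or.inl rfl
  · exact Or.inr (Or.inr rfl)
  · exact Or.inr (Or.inl rfl)

lemma pend_right (hn6 : 6 ≤ n) (hi3 : 3 ≤ i) (hi' : i ≤ n - 1)
    (h : IsLobsterJag n i T u v uA uB) {k : ℕ} (hki : i ≤ k) (hkn : k ≤ n - 1)
    {p : Lbl} (hvp : T.G.Adj (v k) (T.leaf p)) :
    ∃ w : T.G.Walk (T.leaf p) (spineV n i T u uA uB (k + 1)),
      ∀ x ∈ w.support, x = T.leaf p ∨ x = spineV n i T u uA uB (k + 1) ∨ x = v k := by
  have huv : T.G.Adj (u k) (v k) := adj_uv h (by omega) hkn (by omega)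
  rw [spineV_right hi3 (by omega) (by omega), show k + 1 - 1 = k from rfl]
  refine ⟨Walk.cons hvp.symm (Walk.cons huv.symm Walk.nil), ?_⟩
  intro x hx
  simp only [Walk.support_cons, Walk.support_nil, List.mem_cons,
    List.mem_singleton, List.not_mem_nil, or_false] at hx
  rcases hx with rfl | rfl | rfl
  · exact Or.inl rfl
  · exact Or.inr (Or.inr rfl)
  · exact Or.inr (Or.inl rfl)

lemma anchor (hn2 : n % 2 = 0) (hn6 : 6 ≤ n) (hi3 : 3 ≤ i) (hi' : i ≤ n - 1)
    (h : IsLobsterJag n i T u v uA uB) (t : Bool) (m : ℕ) (hm1 : 1 ≤ m) (hmn : m ≤ n) :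
    ∃ c, c ≤ n + 1 ∧ AnchData n i t m c ∧
      ∃ w : T.G.Walk (T.leaf (t, m)) (spineV n i T u uA uB c),
        ∀ x ∈ w.support, x = T.leaf (t, m) ∨ x = spineV n i T u uA uB c ∨
          ∃ k, 1 ≤ k ∧ k ≤ n - 1 ∧ k ≠ i - 1 ∧ x = v k ∧ PendData i t m c k := by
  cases t with
  | false =>
    by_cases h1 : m = 1
    · subst h1
      refine ⟨0, by omega, Or.inl ⟨rfl, rfl, rfl⟩, ?_⟩
      rw [spineV_zero]
      refine ⟨Walk.nil, ?_⟩
      intro x hx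
      have hx : x = _ := List.mem_singleton.mp hx
      exact Or.inl hx
    · by_cases h2 : i % 2 = 0 ∧ m = i
      · obtain ⟨hi2, hmi⟩ := h2
        subst m
        have hA : T.G.Adj (T.leaf ((false : Bool), i)) uA := (adj_uA_even h hi2).symm
        refine ⟨i - 1, by omega,
          Or.inr (Or.inr (Or.inl ⟨rfl, rfl, by simp only [Bool.cond_false]; omega⟩)), ?_⟩
        rw [spineV_uA hi3]
        refine ⟨Walk.cons hA Walk.nil, ?_⟩
        intro x hx
        simp only [Walk.support_cons, Walk.support_nil, List.mem_cons,
          List.mem_singleton, List.not_mem_nil, or_false] at hx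
        rcases hx with rfl | rfl
        · exact Or.inl rfl
        · exact Or.inr (Or.inl rfl)
      · by_cases h3 : i % 2 = 1 ∧ m = i - 1
        · obtain ⟨hi2, hmi⟩ := h3
          subst m
          have hA : T.G.Adj (T.leaf ((false : Bool), i - 1)) uB := (adj_uB_odd h hi2).symm
          refine ⟨i, by omega,
            Or.inr (Or.inr (Or.inr (Or.inl ⟨rfl, rfl,
              by simp only [Bool.cond_false]; omega⟩))), ?_⟩
          rw [spineV_uB hi3]
          refine ⟨Walk.cons hA Walk.nil, ?_⟩
          intro x hx
          simp only [Walk.support_cons, Walk.support_nil, List.mem_cons,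
            List.mem_singleton, List.not_mem_nil, or_false] at hx
          rcases hx with rfl | rfl
          · exact Or.inl rfl
          · exact Or.inr (Or.inl rfl)
        · by_cases h4 : m ≤ i - 1
          · rcases Nat.mod_two_eq_zero_or_one m with hm2 | hm2
            · -- left pendant, k = m, m even
              have hkle : m ≤ i - 2 := by omega
              have hvp : T.G.Adj (v m) (T.leaf ((false : Bool), m)) :=
                adj_v_left_a h (by omega) (by omega) hm2 (Or.inl rfl)
              obtain ⟨w, hw⟩ := pend_left hn6 hi3 hi' h (by omega) hkle hvp
              have hpd : PendData i false m m m :=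
                ⟨Or.inl rfl, Or.inl ⟨hkle, rfl, by simp only [Bool.cond_false]; omega⟩⟩
              refine ⟨m, by omega,
                Or.inr (Or.inr (Or.inr (Or.inr ⟨m, by omega, by omega, by omega, hpd⟩))),
                w, ?_⟩
              intro x hx
              rcases hw x hx with h' | h' | h'
              · exact Or.inl h'
              · exact Or.inr (Or.inl h')
              · exact Or.inr (Or.inr ⟨m, by omega, by omega, by omega, h', hpd⟩)
            · -- left pendant, k = m - 1, m odd (m ≥ 3)
              have hfix : m - 1 + 1 = m := by omega
              have hkle : m - 1 ≤ i - 2 := by omega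
              have hvp : T.G.Adj (v (m - 1)) (T.leaf ((false : Bool), m)) :=
                adj_v_left_a h (by omega) (by omega) (by omega)
                  (Or.inr (by rw [hfix]; rfl))
              obtain ⟨w, hw⟩ := pend_left hn6 hi3 hi' h (by omega) hkle hvp
              have hpd : PendData i false m (m - 1) (m - 1) :=
                ⟨Or.inr hfix.symm,
                  Or.inl ⟨hkle, rfl, by simp only [Bool.cond_false]; omega⟩⟩
              refine ⟨m - 1, by omega,
                Or.inr (Or.inr (Or.inr (Or.inr
                  ⟨m - 1, by omega, by omega, by omega, hpd⟩))), w, ?_⟩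
              intro x hx
              rcases hw x hx with h' | h' | h'
              · exact Or.inl h'
              · exact Or.inr (Or.inl h')
              · exact Or.inr (Or.inr ⟨m - 1, by omega, by omega, by omega, h', hpd⟩)
          · rcases Nat.mod_two_eq_zero_or_one m with hm2 | hm2
            · -- right pendant, k = m - 1, m even
              have hfix : m - 1 + 1 = m := by omega
              have hki : i ≤ m - 1 := by omega
              have hvp : T.G.Adj (v (m - 1)) (T.leaf ((false : Bool), m)) :=
                adj_v_right_a h (by omega) (by omega) (by omega)
                  (Or.inr (by rw [hfix]; rfl))
              obtain ⟨w, hw⟩ := pend_right hn6 hi3 hi' h hki (by omega) hvp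
              have hpd : PendData i false m (m - 1 + 1) (m - 1) :=
                ⟨Or.inr hfix.symm,
                  Or.inr ⟨hki, rfl, by simp only [Bool.cond_false]; omega⟩⟩
              refine ⟨m - 1 + 1, by omega,
                Or.inr (Or.inr (Or.inr (Or.inr
                  ⟨m - 1, by omega, by omega, by omega, hpd⟩))), w, ?_⟩
              intro x hx
              rcases hw x hx with h' | h' | h'
              · exact Or.inl h'
              · exact Or.inr (Or.inl h')
              · exact Or.inr (Or.inr ⟨m - 1, by omega, by omega, by omega, h', hpd⟩)
            · -- right pendant, k = m, m odd
              have hkn : m ≤ n - 1 := by omega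
              have hvp : T.G.Adj (v m) (T.leaf ((false : Bool), m)) :=
                adj_v_right_a h (by omega) hkn hm2 (Or.inl rfl)
              obtain ⟨w, hw⟩ := pend_right hn6 hi3 hi' h (by omega) hkn hvp
              have hpd : PendData i false m (m + 1) m :=
                ⟨Or.inl rfl, Or.inr ⟨by omega, rfl, by simp only [Bool.cond_false]; omega⟩⟩
              refine ⟨m + 1, by omega,
                Or.inr (Or.inr (Or.inr (Or.inr ⟨m, by omega, hkn, by omega, hpd⟩))),
                w, ?_⟩
              intro x hx
              rcases hw x hx with h' | h' | h'
              · exact Or.inl h'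
              · exact Or.inr (Or.inl h')
              · exact Or.inr (Or.inr ⟨m, by omega, hkn, by omega, h', hpd⟩)
  | true =>
    by_cases h1 : m = n
    · subst m
      refine ⟨n + 1, by omega, Or.inr (Or.inl ⟨rfl, rfl, rfl⟩), ?_⟩
      rw [spineV_top hn6 hi3 hi']
      refine ⟨Walk.nil, ?_⟩
      intro x hx
      have hx : x = _ := List.mem_singleton.mp hx
      exact Or.inl hx
    · by_cases h2 : i % 2 = 1 ∧ m = i
      · obtain ⟨hi2, hmi⟩ := h2
        subst m
        have hA : T.G.Adj (T.leaf ((true : Bool), i)) uA := (adj_uA_odd h hi2).symm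
        refine ⟨i - 1, by omega,
          Or.inr (Or.inr (Or.inl ⟨rfl, rfl, by simp only [Bool.cond_true]; omega⟩)), ?_⟩
        rw [spineV_uA hi3]
        refine ⟨Walk.cons hA Walk.nil, ?_⟩
        intro x hx
        simp only [Walk.support_cons, Walk.support_nil, List.mem_cons,
          List.mem_singleton, List.not_mem_nil, or_false] at hx
        rcases hx with rfl | rfl
        · exact Or.inl rfl
        · exact Or.inr (Or.inl rfl)
      · by_cases h3 : i % 2 = 0 ∧ m = i - 1
        · obtain ⟨hi2, hmi⟩ := h3
          subst m
          have hA : T.G.Adj (T.leaf ((true : Bool), i - 1)) uB := (adj_uB_even h hi2).symm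
          refine ⟨i, by omega,
            Or.inr (Or.inr (Or.inr (Or.inl ⟨rfl, rfl,
              by simp only [Bool.cond_true]; omega⟩))), ?_⟩
          rw [spineV_uB hi3]
          refine ⟨Walk.cons hA Walk.nil, ?_⟩
          intro x hx
          simp only [Walk.support_cons, Walk.support_nil, List.mem_cons,
            List.mem_singleton, List.not_mem_nil, or_false] at hx
          rcases hx with rfl | rfl
          · exact Or.inl rfl
          · exact Or.inr (Or.inl rfl)
        · by_cases h4 : m ≤ i - 1
          · rcases Nat.mod_two_eq_zero_or_one m with hm2 | hm2
            · -- left pendant, k = m - 1, m even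
              have hfix : m - 1 + 1 = m := by omega
              have hkle : m - 1 ≤ i - 2 := by omega
              have hvp : T.G.Adj (v (m - 1)) (T.leaf ((true : Bool), m)) :=
                adj_v_left_b h (by omega) (by omega) (by omega)
                  (Or.inr (by rw [hfix]; rfl))
              obtain ⟨w, hw⟩ := pend_left hn6 hi3 hi' h (by omega) hkle hvp
              have hpd : PendData i true m (m - 1) (m - 1) :=
                ⟨Or.inr hfix.symm,
                  Or.inl ⟨hkle, rfl, by simp only [Bool.cond_true]; omega⟩⟩
              refine ⟨m - 1, by omega,
                Or.inr (Or.inr (Or.inr (Or.inr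
                  ⟨m - 1, by omega, by omega, by omega, hpd⟩))), w, ?_⟩
              intro x hx
              rcases hw x hx with h' | h' | h'
              · exact Or.inl h'
              · exact Or.inr (Or.inl h')
              · exact Or.inr (Or.inr ⟨m - 1, by omega, by omega, by omega, h', hpd⟩)
            · -- left pendant, k = m, m odd
              have hkle : m ≤ i - 2 := by omega
              have hvp : T.G.Adj (v m) (T.leaf ((true : Bool), m)) :=
                adj_v_left_b h (by omega) (by omega) hm2 (Or.inl rfl)
              obtain ⟨w, hw⟩ := pend_left hn6 hi3 hi' h (by omega) hkle hvp
              have hpd : PendData i true m m m :=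
                ⟨Or.inl rfl, Or.inl ⟨hkle, rfl, by simp only [Bool.cond_true]; omega⟩⟩
              refine ⟨m, by omega,
                Or.inr (Or.inr (Or.inr (Or.inr ⟨m, by omega, by omega, by omega, hpd⟩))),
                w, ?_⟩
              intro x hx
              rcases hw x hx with h' | h' | h'
              · exact Or.inl h'
              · exact Or.inr (Or.inl h')
              · exact Or.inr (Or.inr ⟨m, by omega, by omega, by omega, h', hpd⟩)
          · rcases Nat.mod_two_eq_zero_or_one m with hm2 | hm2
            · -- right pendant, k = m, m even
              have hkn : m ≤ n - 1 := by omega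
              have hvp : T.G.Adj (v m) (T.leaf ((true : Bool), m)) :=
                adj_v_right_b h (by omega) hkn hm2 (Or.inl rfl)
              obtain ⟨w, hw⟩ := pend_right hn6 hi3 hi' h (by omega) hkn hvp
              have hpd : PendData i true m (m + 1) m :=
                ⟨Or.inl rfl, Or.inr ⟨by omega, rfl, by simp only [Bool.cond_true]; omega⟩⟩
              refine ⟨m + 1, by omega,
                Or.inr (Or.inr (Or.inr (Or.inr ⟨m, by omega, hkn, by omega, hpd⟩))),
                w, ?_⟩
              intro x hx
              rcases hw x hx with h' | h' | h'
              · exact Or.inl h'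
              · exact Or.inr (Or.inl h')
              · exact Or.inr (Or.inr ⟨m, by omega, hkn, by omega, h', hpd⟩)
            · -- right pendant, k = m - 1, m odd
              have hfix : m - 1 + 1 = m := by omega
              have hki : i ≤ m - 1 := by omega
              have hvp : T.G.Adj (v (m - 1)) (T.leaf ((true : Bool), m)) :=
                adj_v_right_b h (by omega) (by omega) (by omega)
                  (Or.inr (by rw [hfix]; rfl))
              obtain ⟨w, hw⟩ := pend_right hn6 hi3 hi' h hki (by omega) hvp
              have hpd : PendData i true m (m - 1 + 1) (m - 1) :=
                ⟨Or.inr hfix.symm,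
                  Or.inr ⟨hki, rfl, by simp only [Bool.cond_true]; omega⟩⟩
              refine ⟨m - 1 + 1, by omega,
                Or.inr (Or.inr (Or.inr (Or.inr
                  ⟨m - 1, by omega, by omega, by omega, hpd⟩))), w, ?_⟩
              intro x hx
              rcases hw x hx with h' | h' | h'
              · exact Or.inl h'
              · exact Or.inr (Or.inl h')
              · exact Or.inr (Or.inr ⟨m - 1, by omega, by omega, by omega, h', hpd⟩)


lemma spineV_eq_leaf (hn6 : 6 ≤ n) (hi3 : 3 ≤ i) (hi' : i ≤ n - 1)
    (h : IsLobsterJag n i T u v uA uB) {c : ℕ} (hc : c ≤ n + 1) {p : Lbl}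
    (hp : p ∈ Xset n) (heq : spineV n i T u uA uB c = T.leaf p) :
    (c = 0 ∧ p = a 1) ∨ (c = n + 1 ∧ p = b n) := by
  have hleaf := h.2.2.1
  have hcase : c = 0 ∨ (1 ≤ c ∧ c ≤ i - 2) ∨ c = i - 1 ∨ c = i ∨ (i + 1 ≤ c ∧ c ≤ n) ∨
      c = n + 1 := by omega
  rcases hcase with hc0 | ⟨h1, h2⟩ | hc0 | hc0 | ⟨h1, h2⟩ | hc0
  · rw [hc0, spineV_zero] at heq
    exact Or.inl ⟨hc0, (T.leaf_injOn (a1_mem hn6) hp heq).symm⟩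
  · rw [spineV_left h1 h2] at heq
    exact absurd heq.symm (((hleaf p hp).2.2 c h1 (by omega) (by omega)).1)
  · rw [hc0, spineV_uA hi3] at heq
    exact absurd heq.symm (hleaf p hp).1
  · rw [hc0, spineV_uB hi3] at heq
    exact absurd heq.symm (hleaf p hp).2.1
  · rw [spineV_right hi3 h1 h2] at heq
    exact absurd heq.symm (((hleaf p hp).2.2 (c - 1) (by omega) (by omega) (by omega)).1)
  · rw [hc0, spineV_top hn6 hi3 hi'] at heq
    exact Or.inr ⟨hc0, (T.leaf_injOn (bn_mem hn6) hp heq).symm⟩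

lemma spineV_inj (hn6 : 6 ≤ n) (hi3 : 3 ≤ i) (hi' : i ≤ n - 1)
    (h : IsLobsterJag n i T u v uA uB) {c c' : ℕ} (hlt : c < c') (hc' : c' ≤ n + 1) :
    spineV n i T u uA uB c ≠ spineV n i T u uA uB c' := by
  have hdist := h.1
  have hAB := h.2.1
  have hleaf := h.2.2.1
  have huinj : ∀ k l, 1 ≤ k → k ≤ n - 1 → k ≠ i - 1 → 1 ≤ l → l ≤ n - 1 → l ≠ i - 1 →
      u k = u l → k = l := fun k l a1 a2 a3 b1 b2 b3 => (hdist k l a1 a2 a3 b1 b2 b3).1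
  have huA : ∀ k, 1 ≤ k → k ≤ n - 1 → k ≠ i - 1 → u k ≠ uA :=
    fun k a1 a2 a3 => (hdist k k a1 a2 a3 a1 a2 a3).2.2.2.1
  have huB : ∀ k, 1 ≤ k → k ≤ n - 1 → k ≠ i - 1 → u k ≠ uB :=
    fun k a1 a2 a3 => (hdist k k a1 a2 a3 a1 a2 a3).2.2.2.2.1
  intro heq
  rcases (show c = 0 ∨ (1 ≤ c ∧ c ≤ i - 2) ∨ c = i - 1 ∨ c = i ∨ (i + 1 ≤ c ∧ c ≤ n) ∨
      c = n + 1 from by omega) with hA1 | ⟨hA1, hA2⟩ | hA1 | hA1 | ⟨hA1, hA2⟩ | hA1 <;>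
    rcases (show c' = 0 ∨ (1 ≤ c' ∧ c' ≤ i - 2) ∨ c' = i - 1 ∨ c' = i ∨
      (i + 1 ≤ c' ∧ c' ≤ n) ∨ c' = n + 1 from by omega) with
      hB1 | ⟨hB1, hB2⟩ | hB1 | hB1 | ⟨hB1, hB2⟩ | hB1 <;>
  (first
    | rw [hA1, spineV_zero] at heq
    | rw [spineV_left hA1 hA2] at heq
    | rw [hA1, spineV_uA hi3] at heq
    | rw [hA1, spineV_uB hi3] at heq
    | rw [spineV_right hi3 hA1 hA2] at heq
    | rw [hA1, spineV_top hn6 hi3 hi'] at heq) <;>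
  (first
    | rw [hB1, spineV_zero] at heq
    | rw [spineV_left hB1 hB2] at heq
    | rw [hB1, spineV_uA hi3] at heq
    | rw [hB1, spineV_uB hi3] at heq
    | rw [spineV_right hi3 hB1 hB2] at heq
    | rw [hB1, spineV_top hn6 hi3 hi'] at heq) <;>
  (first
    | omega
    | exact hAB heq
    | exact (hleaf _ (a1_mem hn6)).1 heq
    | exact (hleaf _ (a1_mem hn6)).2.1 heq
    | exact ((hleaf _ (a1_mem hn6)).2.2 _ (by omega) (by omega) (by omega)).1 heq
    | exact (hleaf _ (bn_mem hn6)).1 heq.symm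
    | exact (hleaf _ (bn_mem hn6)).2.1 heq.symm
    | exact ((hleaf _ (bn_mem hn6)).2.2 _ (by omega) (by omega) (by omega)).1 heq.symm
    | exact huA _ (by omega) (by omega) (by omega) heq
    | exact huB _ (by omega) (by omega) (by omega) heq
    | exact huA _ (by omega) (by omega) (by omega) heq.symm
    | exact huB _ (by omega) (by omega) (by omega) heq.symm
    | (have := huinj _ _ (by omega) (by omega) (by omega) (by omega) (by omega)
        (by omega) heq; omega)
    | (have := T.leaf_injOn (a1_mem hn6) (bn_mem hn6) heq; simp [a, b] at this))

lemma spineV_ne_v (hn6 : 6 ≤ n) (hi3 : 3 ≤ i) (hi' : i ≤ n - 1)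
    (h : IsLobsterJag n i T u v uA uB) {c : ℕ} (hc : c ≤ n + 1) {k : ℕ}
    (hk1 : 1 ≤ k) (hk2 : k ≤ n - 1) (hk3 : k ≠ i - 1) :
    spineV n i T u uA uB c ≠ v k := by
  have hdist := h.1
  have hleaf := h.2.2.1
  have huv : ∀ l, 1 ≤ l → l ≤ n - 1 → l ≠ i - 1 → u l ≠ v k :=
    fun l b1 b2 b3 => (hdist l k b1 b2 b3 hk1 hk2 hk3).2.2.1
  have hvA : v k ≠ uA := (hdist k k hk1 hk2 hk3 hk1 hk2 hk3).2.2.2.2.2.1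
  have hvB : v k ≠ uB := (hdist k k hk1 hk2 hk3 hk1 hk2 hk3).2.2.2.2.2.2
  intro heq
  rcases (show c = 0 ∨ (1 ≤ c ∧ c ≤ i - 2) ∨ c = i - 1 ∨ c = i ∨ (i + 1 ≤ c ∧ c ≤ n) ∨
      c = n + 1 from by omega) with hA1 | ⟨hA1, hA2⟩ | hA1 | hA1 | ⟨hA1, hA2⟩ | hA1 <;>
  (first
    | rw [hA1, spineV_zero] at heq
    | rw [spineV_left hA1 hA2] at heq
    | rw [hA1, spineV_uA hi3] at heq
    | rw [hA1, spineV_uB hi3] at heq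
    | rw [spineV_right hi3 hA1 hA2] at heq
    | rw [hA1, spineV_top hn6 hi3 hi'] at heq) <;>
  (first
    | exact ((hleaf _ (a1_mem hn6)).2.2 k hk1 hk2 hk3).2 heq
    | exact ((hleaf _ (bn_mem hn6)).2.2 k hk1 hk2 hk3).2 heq
    | exact hvA heq.symm
    | exact hvB heq.symm
    | exact huv _ (by omega) (by omega) (by omega) heq)

lemma connect (hn2 : n % 2 = 0) (hn6 : 6 ≤ n) (hi3 : 3 ≤ i) (hi' : i ≤ n - 1)
    (hj3 : 3 ≤ j) (hj' : j ≤ n - 1) (hij : j ≠ i) (h : IsLobsterJag n i T u v uA uB)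
    (s : ℕ) (t1 : Bool) (m1 : ℕ) (t2 : Bool) (m2 : ℕ)
    (h11 : 1 ≤ m1) (h12 : m1 ≤ n) (h21 : 1 ≤ m2) (h22 : m2 ≤ n)
    (hp1 : phi j (t1, m1) = s) (hp2 : phi j (t2, m2) = s) :
    ∃ w : T.G.Walk (T.leaf (t1, m1)) (T.leaf (t2, m2)),
      ∀ x ∈ w.support, x ∈ Region n i j T u v uA uB s := by
  by_cases hs0 : s = 0
  · subst hs0
    obtain ⟨c1, hc1, hd1, w1, hw1⟩ := anchor hn2 hn6 hi3 hi' h t1 m1 h11 h12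
    obtain ⟨c2, hc2, hd2, w2, hw2⟩ := anchor hn2 hn6 hi3 hi' h t2 m2 h21 h22
    obtain ⟨U1, hU1⟩ := spine_walk hn6 hi3 hi' h c1 hc1 0 (by omega)
    obtain ⟨U2, hU2⟩ := spine_walk hn6 hi3 hi' h c2 hc2 0 (by omega)
    have hc1j := anch_le0 hn2 hn6 hi3 hi' hj3 hj' hij hd1 hp1
    have hc2j := anch_le0 hn2 hn6 hi3 hi' hj3 hj' hij hd2 hp2
    refine ⟨w1.append (U1.append (U2.reverse.append w2.reverse)), ?_⟩
    intro x hx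
    simp only [Walk.mem_support_append_iff, Walk.support_reverse, List.mem_reverse] at hx
    have hxmem : x ∈ w1.support ∨ x ∈ U1.support ∨ x ∈ U2.support ∨ x ∈ w2.support := by
      tauto
    rcases hxmem with hx' | hx' | hx' | hx'
    · rcases hw1 x hx' with rfl | rfl | ⟨k, hk1, hk2, hk3, rfl, hpd⟩
      · exact Or.inl ⟨t1, m1, h11, h12, hp1, rfl⟩
      · exact Or.inr (Or.inl ⟨rfl, c1, hc1j, rfl⟩)
      · exact Or.inr (Or.inr (Or.inr (Or.inl ⟨rfl, k, hk1, hk2, hk3,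
          pend0 hn2 hn6 hi3 hi' hj3 hj' hij hpd hp1, rfl⟩)))
    · obtain ⟨e, he0, hec, rfl⟩ := hU1 x hx'
      exact Or.inr (Or.inl ⟨rfl, e, by omega, rfl⟩)
    · obtain ⟨e, he0, hec, rfl⟩ := hU2 x hx'
      exact Or.inr (Or.inl ⟨rfl, e, by omega, rfl⟩)
    · rcases hw2 x hx' with rfl | rfl | ⟨k, hk1, hk2, hk3, rfl, hpd⟩
      · exact Or.inl ⟨t2, m2, h21, h22, hp2, rfl⟩
      · exact Or.inr (Or.inl ⟨rfl, c2, hc2j, rfl⟩)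
      · exact Or.inr (Or.inr (Or.inr (Or.inl ⟨rfl, k, hk1, hk2, hk3,
          pend0 hn2 hn6 hi3 hi' hj3 hj' hij hpd hp2, rfl⟩)))
  · by_cases hs5 : s = 5
    · subst hs5
      obtain ⟨c1, hc1, hd1, w1, hw1⟩ := anchor hn2 hn6 hi3 hi' h t1 m1 h11 h12
      obtain ⟨c2, hc2, hd2, w2, hw2⟩ := anchor hn2 hn6 hi3 hi' h t2 m2 h21 h22
      obtain ⟨U1, hU1⟩ := spine_walk hn6 hi3 hi' h (n + 1) (le_refl _) c1 hc1
      obtain ⟨U2, hU2⟩ := spine_walk hn6 hi3 hi' h (n + 1) (le_refl _) c2 hc2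
      have hc1j := anch_ge5 hn2 hn6 hi3 hi' hj3 hj' hij hd1 hp1
      have hc2j := anch_ge5 hn2 hn6 hi3 hi' hj3 hj' hij hd2 hp2
      refine ⟨w1.append (U1.reverse.append (U2.append w2.reverse)), ?_⟩
      intro x hx
      simp only [Walk.mem_support_append_iff, Walk.support_reverse, List.mem_reverse] at hx
      have hxmem : x ∈ w1.support ∨ x ∈ U1.support ∨ x ∈ U2.support ∨ x ∈ w2.support := by
        tauto
      rcases hxmem with hx' | hx' | hx' | hx'
      · rcases hw1 x hx' with rfl | rfl | ⟨k, hk1, hk2, hk3, rfl, hpd⟩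
        · exact Or.inl ⟨t1, m1, h11, h12, hp1, rfl⟩
        · exact Or.inr (Or.inr (Or.inl ⟨rfl, c1, hc1j, hc1, rfl⟩))
        · exact Or.inr (Or.inr (Or.inr (Or.inr ⟨rfl, k, hk1, hk2, hk3,
            pend5 hn2 hn6 hi3 hi' hj3 hj' hij hpd hp1, rfl⟩)))
      · obtain ⟨e, he0, hec, rfl⟩ := hU1 x hx'
        exact Or.inr (Or.inr (Or.inl ⟨rfl, e, by omega, by omega, rfl⟩))
      · obtain ⟨e, he0, hec, rfl⟩ := hU2 x hx'
        exact Or.inr (Or.inr (Or.inl ⟨rfl, e, by omega, by omega, rfl⟩))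
      · rcases hw2 x hx' with rfl | rfl | ⟨k, hk1, hk2, hk3, rfl, hpd⟩
        · exact Or.inl ⟨t2, m2, h21, h22, hp2, rfl⟩
        · exact Or.inr (Or.inr (Or.inl ⟨rfl, c2, hc2j, hc2, rfl⟩))
        · exact Or.inr (Or.inr (Or.inr (Or.inr ⟨rfl, k, hk1, hk2, hk3,
            pend5 hn2 hn6 hi3 hi' hj3 hj' hij hpd hp2, rfl⟩)))
    · have hle := phi_le5 j t1 m1
      have hs : s = 1 ∨ s = 2 ∨ s = 3 ∨ s = 4 := by omega
      obtain ⟨ht, hm⟩ := phi_singleton hs hp1 hp2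
      subst ht
      subst hm
      refine ⟨Walk.nil, ?_⟩
      intro x hx
      simp only [Walk.support_nil, List.mem_singleton] at hx
      exact Or.inl ⟨t1, m1, h11, h12, hp1, hx⟩

lemma region_disj (hn2 : n % 2 = 0) (hn6 : 6 ≤ n) (hi3 : 3 ≤ i) (hi' : i ≤ n - 1)
    (hj3 : 3 ≤ j) (hj' : j ≤ n - 1) (hij : j ≠ i) (h : IsLobsterJag n i T u v uA uB)
    {s t' : ℕ} (hst : s ≠ t') :
    Disjoint (Region n i j T u v uA uB s) (Region n i j T u v uA uB t') := by
  rw [Set.disjoint_left]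
  rintro x hxs hxt
  have hleaf := h.2.2.1
  have hdist := h.1
  rcases hxs with ⟨ta, ma, ha1, ha2, hpa, rfl⟩ | ⟨hs0, c, hcj, hxc⟩ |
    ⟨hs5, c, hjc, hcn, hxc⟩ | ⟨hs0, k, hk1, hk2, hk3, hkj, hxv⟩ |
    ⟨hs5, k, hk1, hk2, hk3, hkj, hxv⟩
  · rcases hxt with ⟨tb, mb, hb1, hb2, hpb, heq⟩ | ⟨ht0, c, hcj, hxc⟩ |
      ⟨ht5, c, hjc, hcn, hxc⟩ | ⟨_, k, hk1, hk2, hk3, _, hxv⟩ |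
      ⟨_, k, hk1, hk2, hk3, _, hxv⟩
    · have hab := T.leaf_injOn ⟨ha1, ha2⟩ ⟨hb1, hb2⟩ heq
      apply hst
      rw [← hpa, ← hpb, hab]
    · rcases spineV_eq_leaf hn6 hi3 hi' h (show c ≤ n + 1 by omega) ⟨ha1, ha2⟩ hxc.symm
        with ⟨hc0, hpa1⟩ | ⟨hcn1, hpbn⟩
      · apply hst
        rw [← hpa, hpa1, phi_a1 hj3, ht0]
      · omega
    · rcases spineV_eq_leaf hn6 hi3 hi' h hcn ⟨ha1, ha2⟩ hxc.symm
        with ⟨hc0, hpa1⟩ | ⟨hcn1, hpbn⟩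
      · omega
      · apply hst
        rw [← hpa, hpbn, phi_bn hn2 hn6 hj3 hj', ht5]
    · exact ((hleaf _ ⟨ha1, ha2⟩).2.2 k hk1 hk2 hk3).2 hxv
    · exact ((hleaf _ ⟨ha1, ha2⟩).2.2 k hk1 hk2 hk3).2 hxv
  · rcases hxt with ⟨tb, mb, hb1, hb2, hpb, heq⟩ | ⟨ht0, c2, hcj2, hxc2⟩ |
      ⟨ht5, c2, hjc2, hcn2, hxc2⟩ | ⟨ht0, k, hk1, hk2, hk3, hkj2, hxv⟩ |
      ⟨ht5, k, hk1, hk2, hk3, hkj2, hxv⟩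
    · rcases spineV_eq_leaf hn6 hi3 hi' h (show c ≤ n + 1 by omega) ⟨hb1, hb2⟩
        (hxc.symm.trans heq) with ⟨hc0, hp1⟩ | ⟨hcn1, hp1⟩
      · apply hst
        rw [hs0, ← hpb, hp1, phi_a1 hj3]
      · omega
    · exact hst (hs0.trans ht0.symm)
    · exact spineV_inj hn6 hi3 hi' h (show c < c2 by omega) (by omega)
        (hxc.symm.trans hxc2)
    · exact hst (hs0.trans ht0.symm)
    · exact spineV_ne_v hn6 hi3 hi' h (show c ≤ n + 1 by omega) hk1 hk2 hk3
        (hxc.symm.trans hxv)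
  · rcases hxt with ⟨tb, mb, hb1, hb2, hpb, heq⟩ | ⟨ht0, c2, hcj2, hxc2⟩ |
      ⟨ht5, c2, hjc2, hcn2, hxc2⟩ | ⟨ht0, k, hk1, hk2, hk3, hkj2, hxv⟩ |
      ⟨ht5, k, hk1, hk2, hk3, hkj2, hxv⟩
    · rcases spineV_eq_leaf hn6 hi3 hi' h hcn ⟨hb1, hb2⟩
        (hxc.symm.trans heq) with ⟨hc0, hp1⟩ | ⟨hcn1, hp1⟩
      · omega
      · apply hst
        rw [hs5, ← hpb, hp1, phi_bn hn2 hn6 hj3 hj']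
    · exact spineV_inj hn6 hi3 hi' h (show c2 < c by omega) hcn
        (hxc2.symm.trans hxc)
    · exact hst (hs5.trans ht5.symm)
    · exact spineV_ne_v hn6 hi3 hi' h hcn hk1 hk2 hk3 (hxc.symm.trans hxv)
    · exact hst (hs5.trans ht5.symm)
  · rcases hxt with ⟨tb, mb, hb1, hb2, hpb, heq⟩ | ⟨ht0, c2, hcj2, hxc2⟩ |
      ⟨ht5, c2, hjc2, hcn2, hxc2⟩ | ⟨ht0, k2, hl1, hl2, hl3, hkj2, hxv2⟩ |
      ⟨ht5, k2, hl1, hl2, hl3, hkj2, hxv2⟩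
    · exact ((hleaf _ ⟨hb1, hb2⟩).2.2 k hk1 hk2 hk3).2 (heq.symm.trans hxv)
    · exact hst (hs0.trans ht0.symm)
    · exact spineV_ne_v hn6 hi3 hi' h hcn2 hk1 hk2 hk3 (hxc2.symm.trans hxv)
    · exact hst (hs0.trans ht0.symm)
    · have hkk := (hdist k k2 hk1 hk2 hk3 hl1 hl2 hl3).2.1 (hxv.symm.trans hxv2)
      omega
  · rcases hxt with ⟨tb, mb, hb1, hb2, hpb, heq⟩ | ⟨ht0, c2, hcj2, hxc2⟩ |
      ⟨ht5, c2, hjc2, hcn2, hxc2⟩ | ⟨ht0, k2, hl1, hl2, hl3, hkj2, hxv2⟩ |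
      ⟨ht5, k2, hl1, hl2, hl3, hkj2, hxv2⟩
    · exact ((hleaf _ ⟨hb1, hb2⟩).2.2 k hk1 hk2 hk3).2 (heq.symm.trans hxv)
    · exact spineV_ne_v hn6 hi3 hi' h (show c2 ≤ n + 1 by omega) hk1 hk2 hk3
        (hxc2.symm.trans hxv)
    · exact hst (hs5.trans ht5.symm)
    · have hkk := (hdist k k2 hk1 hk2 hk3 hl1 hl2 hl3).2.1 (hxv.symm.trans hxv2)
      omega
    · exact hst (hs5.trans ht5.symm)

end GraphLemmas

lemma subtree_sub {L : Type} {X : Set L} (T : PhyloTree X) (S : Set L) (R : Set T.V)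
    (hconn : ∀ x ∈ S ∩ X, ∀ y ∈ S ∩ X,
      ∃ w : T.G.Walk (T.leaf x) (T.leaf y), ∀ z ∈ w.support, z ∈ R) :
    subtree T S ⊆ R := by
  classical
  rintro w ⟨x, hx, y, hy, p, hp, hwp⟩
  obtain ⟨q, hq⟩ := hconn x hx y hy
  have hun := T.isTree.existsUnique_path (T.leaf x) (T.leaf y)
  have hpq : p = q.bypass := hun.unique hp q.bypass_isPath
  exact hq _ (q.support_bypass_subset (hpq ▸ hwp))





theorem lobsterJag_displays_phi (n i j : ℕ) (hn : Even n) (hn6 : 6 ≤ n)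
    (hi : 3 ≤ i) (hi' : i ≤ n - 1) (hj : 3 ≤ j) (hj' : j ≤ n - 1) (hij : j ≠ i)
    (T : PhyloTree (Xset n)) (u v : ℕ → T.V) (uA uB : T.V)
    (h : IsLobsterJag n i T u v uA uB) :
    displays T (phi j) := by
  have hn2 : n % 2 = 0 := Nat.even_iff.mp hn
  intro s t hst
  have key : ∀ s', subtree T {x | phi j x = s'} ⊆ Region n i j T u v uA uB s' := by
    intro s'
    apply subtree_sub
    rintro ⟨t1, m1⟩ ⟨hphi1, hm1⟩ ⟨t2, m2⟩ ⟨hphi2, hm2⟩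
    exact connect hn2 hn6 hi hi' hj hj' hij h s' t1 m1 t2 m2 hm1.1 hm1.2 hm2.1 hm2.2
      hphi1 hphi2
  exact Disjoint.mono (key s) (key t) (region_disj hn2 hn6 hi hi' hj hj' hij h hst)

end PP
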